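/- If φ : ℂ^n → ℂ^n is a homeomorphism, then there exists a basis u₁, …, uₙ of ℂ^n such that φ(u₁), …, φ(uₙ) is also a basis of ℂ^n. Equivalently: there exist vectors u₁, …, uₙ ∈ ℂ^n such that both the family (u₁, …, uₙ) and the family (φ(u₁), …, φ(uₙ)) are linearly independent. -/

import Mathlib

open Matrix in
/-- The set of linearly independent `n`-tuples in `ℂ^n` is dense. -/
lemma aux_dense (n : ℕ) :
    Dense {u : Fin n → (Fin n → ℂ) | LinearIndependent ℂ u} := by
  rw [Metric.dense_iff]
  intro A ε hε
  -- view `A` as a matrix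
  set M : Matrix (Fin n) (Fin n) ℂ := Matrix.of A with hM
  -- choose `t ∈ (0, ε)` with `(t : ℂ)` not in the spectrum of `M`
  have hfin : Set.Finite ((fun t : ℝ => (t : ℂ)) ⁻¹' spectrum ℂ M) :=
    (Matrix.finite_spectrum M).preimage (fun x _ y _ h => by exact_mod_cast h)
  have hIoo : (Set.Ioo (0 : ℝ) ε).Infinite := Set.Ioo_infinite hε
  obtain ⟨t, htI, htS⟩ := (hIoo.diff hfin).nonempty
  obtain ⟨ht0, htε⟩ := htI
  have hunit : IsUnit ((algebraMap ℂ (Matrix (Fin n) (Fin n) ℂ)) (t : ℂ) - M) :=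
    spectrum.notMem_iff.mp (by simpa using htS)
  have hunit' : IsUnit (M - (algebraMap ℂ (Matrix (Fin n) (Fin n) ℂ)) (t : ℂ)) := by
    rw [← neg_sub]; exact hunit.neg
  -- the perturbed matrix, viewed as a tuple of rows
  set B : Fin n → (Fin n → ℂ) :=
    fun i j => (M - (algebraMap ℂ (Matrix (Fin n) (Fin n) ℂ)) (t : ℂ)) i j with hB
  refine ⟨B, ?_, ?_⟩
  · -- `B` is within `ε` of `A`
    rw [Metric.mem_ball]
    have h1 : ∀ i : Fin n, dist (B i) (A i) ≤ t := by
      intro i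
      rw [dist_pi_le_iff ht0.le]
      intro j
      have : B i j - A i j = -((algebraMap ℂ (Matrix (Fin n) (Fin n) ℂ)) (t : ℂ) i j) := by
        simp [hB, hM, Matrix.sub_apply]
      rw [dist_eq_norm, this, norm_neg]
      rcases eq_or_ne i j with h | h
      · subst h
        simp [Matrix.algebraMap_matrix_apply, abs_of_pos ht0]
      · simp [Matrix.algebraMap_matrix_apply, h, ht0.le]
    calc dist B A ≤ t := by rw [dist_pi_le_iff ht0.le]; exact h1
    _ < ε := htε
  · -- `B` is linearly independent
    show LinearIndependent ℂ B
    have : LinearIndependent ℂ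
        (fun i => (M - (algebraMap ℂ (Matrix (Fin n) (Fin n) ℂ)) (t : ℂ)) i) :=
      Matrix.linearIndependent_rows_iff_isUnit.mpr hunit'
    exact this

/-- The set of linearly independent `n`-tuples in `ℂ^n` is open. -/
lemma aux_open (n : ℕ) :
    IsOpen {u : Fin n → (Fin n → ℂ) | LinearIndependent ℂ u} := by
  have heq : {u : Fin n → (Fin n → ℂ) | LinearIndependent ℂ u}
      = (fun u : Fin n → (Fin n → ℂ) => (Matrix.of u).det) ⁻¹' {0}ᶜ := by
    ext u
    simp only [Set.mem_setOf_eq, Set.mem_preimage, Set.mem_compl_iff, Set.mem_singleton_iff]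
    rw [show LinearIndependent ℂ u ↔ LinearIndependent ℂ (Matrix.of u).row from Iff.rfl,
      Matrix.linearIndependent_rows_iff_isUnit, Matrix.isUnit_iff_isUnit_det, isUnit_iff_ne_zero]
  rw [heq]
  exact (isOpen_compl_singleton).preimage ((continuous_id : Continuous (id : Matrix (Fin n) (Fin n) ℂ → _)).matrix_det)

/-- If `φ : ℂ^n → ℂ^n` is a homeomorphism, then there exist vectors
`u₁, …, uₙ ∈ ℂ^n` such that both `(u₁, …, uₙ)` and `(φ u₁, …, φ uₙ)`
are linearly independent (equivalently, both families are bases of `ℂ^n`). -/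
theorem stmt_6 (n : ℕ) (φ : (Fin n → ℂ) ≃ₜ (Fin n → ℂ)) :
    ∃ u : Fin n → (Fin n → ℂ),
      LinearIndependent ℂ u ∧ LinearIndependent ℂ (fun i => φ (u i)) := by
  set S := {u : Fin n → (Fin n → ℂ) | LinearIndependent ℂ u}
  have hSo := aux_open n
  have hSd := aux_dense n
  set Φ : (Fin n → (Fin n → ℂ)) ≃ₜ (Fin n → (Fin n → ℂ)) :=
    Homeomorph.piCongrRight (fun _ : Fin n => φ) with hΦ
  have hTo : IsOpen (Φ ⁻¹' S) := hSo.preimage Φ.continuous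
  have hTd : Dense (Φ ⁻¹' S) := by
    rw [dense_iff_closure_eq, ← Φ.preimage_closure, hSd.closure_eq, Set.preimage_univ]
  have hD : Dense (S ∩ Φ ⁻¹' S) := hSd.inter_of_isOpen_left hTd hSo
  obtain ⟨u, hu1, hu2⟩ := hD.nonempty
  exact ⟨u, hu1, hu2⟩
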